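/- (Extension of a canonical factorization certificate along a stable loop transformation, identity (are3) in the proof of Lemma 6). Let (A_Ψ, B_Ψ, C_Ψ, D_Ψ) be filter matrices with m = nz + nw inputs, M = Mᵀ, and suppose (Z̃, M̃, C̃, D̃) certifies a canonical factorization of (A_Ψ, B_Ψ, C_Ψ, D_Ψ, M). Let A_H ∈ ℝ^{k_H×k_H} be Hurwitz, B_H ∈ ℝ^{k_H×nw}, C_H ∈ ℝ^{nz×k_H}, D_H ∈ ℝ^{nz×nw}, and set C_e := [C_H; 0_{nw×k_H}], D_e := [[I_{nz}, D_H],[0, I_{nw}]], B_e := [0_{k_H×nz}, B_H]. Define the extended realization A_ext := [[A_Ψ, B_Ψ C_e],[0, A_H]], B_ext := [B_Ψ D_e; B_e], C_ext := [C_Ψ, D_Ψ C_e], D_ext := D_Ψ D_e. Then the quadruple (diag(Z̃, 0_{k_H×k_H}), M̃, [C̃, D̃ C_e], D̃ D_e) certifies a canonical factorization of (A_ext, B_ext, C_ext, D_ext, M): the three factorization identities hold for the extended data, D̃ D_e is invertible, and A_ext − B_ext (D̃ D_e)⁻¹ [C̃, D̃ C_e] is Hurwitz. -/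

import Mathlib

open MeasureTheory Matrix

noncomputable section

namespace IQCPaper

/-- Membership in `L2e^p`: measurable and square integrable on every bounded interval. -/
def MemL2e (p : ℕ) (f : ℝ → Fin p → ℝ) : Prop :=
  Measurable f ∧ ∀ T : ℝ, 0 < T → IntegrableOn (fun t => ‖f t‖ ^ 2) (Set.Ioc 0 T) volume

/-- Membership in `L2^p`. -/
def MemL2 (p : ℕ) (f : ℝ → Fin p → ℝ) : Prop :=
  MemL2e p f ∧ IntegrableOn (fun t => ‖f t‖ ^ 2) (Set.Ioi 0) volume

/-- The `L2` norm on `[0,∞)`. -/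
def L2norm (p : ℕ) (f : ℝ → Fin p → ℝ) : ℝ :=
  Real.sqrt (∫ t in Set.Ioi (0 : ℝ), ‖f t‖ ^ 2)

/-- The filter trajectory: absolutely continuous solution of
`ξ' = A ξ + B u`, `ξ(0) = 0`, written in integral form. -/
def IsFilterTraj {k m : Type*} [Fintype k] [Fintype m]
    (A : Matrix k k ℝ) (B : Matrix k m ℝ)
    (u : ℝ → m → ℝ) (ξ : ℝ → k → ℝ) : Prop :=
  Continuous ξ ∧ ξ 0 = 0 ∧
    ∀ t : ℝ, 0 ≤ t → ξ t = ∫ s in (0 : ℝ)..t, (A.mulVec (ξ s) + B.mulVec (u s))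

/-- The KYP matrix. -/
def KYP {n m q : Type*} [Fintype n] [Fintype m] [Fintype q]
    (X : Matrix n n ℝ) (M : Matrix q q ℝ)
    (A : Matrix n n ℝ) (B : Matrix n m ℝ)
    (C : Matrix q n ℝ) (D : Matrix q m ℝ) : Matrix (n ⊕ m) (n ⊕ m) ℝ :=
  fromBlocks (Aᵀ * X + X * A + Cᵀ * M * C) (X * B + Cᵀ * M * D)
    (Bᵀ * X + Dᵀ * M * C) (Dᵀ * M * D)

/-- A real square matrix is Hurwitz if all its complex eigenvalues have negative real part. -/
def IsHurwitz {n : Type*} [Fintype n] [DecidableEq n] (A : Matrix n n ℝ) : Prop :=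
  ∀ μ ∈ spectrum ℂ (A.map Complex.ofReal), μ.re < 0

/-- Finite-horizon IQC with terminal cost matrix `Z`. -/
def FiniteHorizonIQC {k q : Type*} [Fintype k] [Fintype q] (nz nw : ℕ)
    (AΨ : Matrix k k ℝ) (BΨ : Matrix k (Fin nz ⊕ Fin nw) ℝ)
    (CΨ : Matrix q k ℝ) (DΨ : Matrix q (Fin nz ⊕ Fin nw) ℝ)
    (M : Matrix q q ℝ) (Z : Matrix k k ℝ)
    (Δ : (ℝ → Fin nz → ℝ) → (ℝ → Fin nw → ℝ)) : Prop :=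
  ∀ z : ℝ → Fin nz → ℝ, MemL2e nz z →
    ∀ ξ : ℝ → k → ℝ,
      IsFilterTraj AΨ BΨ (fun t => Sum.elim (z t) (Δ z t)) ξ →
      ∀ T : ℝ, 0 < T →
        0 ≤ (∫ t in (0 : ℝ)..T,
              (CΨ.mulVec (ξ t) + DΨ.mulVec (Sum.elim (z t) (Δ z t))) ⬝ᵥ
                M.mulVec (CΨ.mulVec (ξ t) + DΨ.mulVec (Sum.elim (z t) (Δ z t))))
            + (ξ T) ⬝ᵥ Z.mulVec (ξ T)

/-- Factorization identities for `(Z̃, M̃, C̃, D̃)`. -/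
def FactIds {k m q : Type*} [Fintype k] [Fintype m] [Fintype q]
    (AΨ : Matrix k k ℝ) (BΨ : Matrix k m ℝ) (CΨ : Matrix q k ℝ) (DΨ : Matrix q m ℝ)
    (M : Matrix q q ℝ) (Z' : Matrix k k ℝ) (M' : Matrix m m ℝ)
    (C' : Matrix m k ℝ) (D' : Matrix m m ℝ) : Prop :=
  Z'.IsSymm ∧ M'.IsSymm ∧
    AΨᵀ * Z' + Z' * AΨ + CΨᵀ * M * CΨ = C'ᵀ * M' * C' ∧
    Z' * BΨ + CΨᵀ * M * DΨ = C'ᵀ * M' * D' ∧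
    DΨᵀ * M * DΨ = D'ᵀ * M' * D'

/-- `(Z̃, M̃, C̃, D̃)` certifies a canonical factorization of `(AΨ, BΨ, CΨ, DΨ, M)`. -/
def CertifiesCanonical {k m q : Type*} [Fintype k] [Fintype m] [Fintype q]
    [DecidableEq k] [DecidableEq m]
    (AΨ : Matrix k k ℝ) (BΨ : Matrix k m ℝ) (CΨ : Matrix q k ℝ) (DΨ : Matrix q m ℝ)
    (M : Matrix q q ℝ) (Z' : Matrix k k ℝ) (M' : Matrix m m ℝ)
    (C' : Matrix m k ℝ) (D' : Matrix m m ℝ) : Prop :=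
  FactIds AΨ BΨ CΨ DΨ M Z' M' C' D' ∧ IsUnit D' ∧ IsHurwitz (AΨ - BΨ * D'⁻¹ * C')

/-- A causal operator. -/
def Causal (nz nw : ℕ) (Δ : (ℝ → Fin nz → ℝ) → (ℝ → Fin nw → ℝ)) : Prop :=
  ∀ z z' : ℝ → Fin nz → ℝ, ∀ T : ℝ, 0 < T →
    (∀ᵐ t ∂(volume.restrict (Set.Icc (0 : ℝ) T)), z t = z' t) →
    (∀ᵐ t ∂(volume.restrict (Set.Icc (0 : ℝ) T)), Δ z t = Δ z' t)

/-- A bounded operator from `L2^{nz}` to `L2^{nw}`. -/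
def BoundedOp (nz nw : ℕ) (Δ : (ℝ → Fin nz → ℝ) → (ℝ → Fin nw → ℝ)) : Prop :=
  ∃ c : ℝ, 0 ≤ c ∧ ∀ z, MemL2 nz z → MemL2 nw (Δ z) ∧ L2norm nw (Δ z) ≤ c * L2norm nz z


/-- `C_e = [C_H; 0]`. -/
def Ce {nz nw kH : ℕ} (CH : Matrix (Fin nz) (Fin kH) ℝ) :
    Matrix (Fin nz ⊕ Fin nw) (Fin kH) ℝ :=
  fromRows CH 0

/-- `D_e = [[I, D_H], [0, I]]`. -/
def De {nz nw : ℕ} (DH : Matrix (Fin nz) (Fin nw) ℝ) :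
    Matrix (Fin nz ⊕ Fin nw) (Fin nz ⊕ Fin nw) ℝ :=
  fromBlocks 1 DH 0 1

/-- `B_e = [0, B_H]`. -/
def Be {nz nw kH : ℕ} (BH : Matrix (Fin kH) (Fin nw) ℝ) :
    Matrix (Fin kH) (Fin nz ⊕ Fin nw) ℝ :=
  fromCols 0 BH


lemma fromBlocks_sub' {l m n o R : Type*} [Sub R]
    (A : Matrix n l R) (B : Matrix n m R) (C : Matrix o l R) (D : Matrix o m R)
    (A' : Matrix n l R) (B' : Matrix n m R) (C' : Matrix o l R) (D' : Matrix o m R) :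
    fromBlocks A B C D - fromBlocks A' B' C' D' =
      fromBlocks (A - A') (B - B') (C - C') (D - D') := by
  ext (i | i) (j | j) <;> rfl

lemma fromRows_add' {m₁ m₂ n R : Type*} [Add R]
    (A : Matrix m₁ n R) (B : Matrix m₂ n R) (A' : Matrix m₁ n R) (B' : Matrix m₂ n R) :
    fromRows A B + fromRows A' B' = fromRows (A + A') (B + B') := by
  ext (i | i) j <;> rfl

lemma isHurwitz_fromBlocks {n m : Type*} [Fintype n] [Fintype m] [DecidableEq n] [DecidableEq m]
    {A : Matrix n n ℝ} {C : Matrix m n ℝ} {D : Matrix m m ℝ}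
    (hA : IsHurwitz A) (hD : IsHurwitz D) : IsHurwitz (fromBlocks A 0 C D) := by
  intro μ hμ
  rw [spectrum.mem_iff, Matrix.isUnit_iff_isUnit_det] at hμ
  have hblock : (algebraMap ℂ (Matrix (n ⊕ m) (n ⊕ m) ℂ) μ
        - (fromBlocks A 0 C D).map Complex.ofReal)
      = fromBlocks (algebraMap ℂ (Matrix n n ℂ) μ - A.map Complex.ofReal) 0
          (-(C.map Complex.ofReal))
          (algebraMap ℂ (Matrix m m ℂ) μ - D.map Complex.ofReal) := by
    rw [Algebra.algebraMap_eq_smul_one, Algebra.algebraMap_eq_smul_one,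
      Algebra.algebraMap_eq_smul_one, ← Matrix.fromBlocks_one, Matrix.fromBlocks_smul,
      Matrix.fromBlocks_map, fromBlocks_sub']
    simp
  rw [hblock, Matrix.det_fromBlocks_zero₁₂] at hμ
  rw [isUnit_iff_ne_zero, not_ne_iff, mul_eq_zero] at hμ
  rcases hμ with h | h
  · exact hA μ (by rw [spectrum.mem_iff, Matrix.isUnit_iff_isUnit_det, isUnit_iff_ne_zero,
      not_ne_iff]; exact h)
  · exact hD μ (by rw [spectrum.mem_iff, Matrix.isUnit_iff_isUnit_det, isUnit_iff_ne_zero,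
      not_ne_iff]; exact h)

/-- Extension of a canonical factorization certificate along a stable loop
transformation (identity (are3) in the proof of Lemma 6). -/
theorem canonical_factorization_extension
    {nz nw k q kH : ℕ}
    (AΨ : Matrix (Fin k) (Fin k) ℝ) (BΨ : Matrix (Fin k) (Fin nz ⊕ Fin nw) ℝ)
    (CΨ : Matrix (Fin q) (Fin k) ℝ) (DΨ : Matrix (Fin q) (Fin nz ⊕ Fin nw) ℝ)
    (M : Matrix (Fin q) (Fin q) ℝ) (hM : M.IsSymm)
    (Z' : Matrix (Fin k) (Fin k) ℝ)
    (M' : Matrix (Fin nz ⊕ Fin nw) (Fin nz ⊕ Fin nw) ℝ)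
    (C' : Matrix (Fin nz ⊕ Fin nw) (Fin k) ℝ)
    (D' : Matrix (Fin nz ⊕ Fin nw) (Fin nz ⊕ Fin nw) ℝ)
    (hcert : CertifiesCanonical AΨ BΨ CΨ DΨ M Z' M' C' D')
    (AH : Matrix (Fin kH) (Fin kH) ℝ) (hAH : IsHurwitz AH)
    (BH : Matrix (Fin kH) (Fin nw) ℝ)
    (CH : Matrix (Fin nz) (Fin kH) ℝ) (DH : Matrix (Fin nz) (Fin nw) ℝ) :
    CertifiesCanonical
      (fromBlocks AΨ (BΨ * Ce CH) 0 AH)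
      (fromRows (BΨ * De DH) (Be BH))
      (fromCols CΨ (DΨ * Ce CH))
      (DΨ * De DH)
      M
      (fromBlocks Z' 0 0 0)
      M'
      (fromCols C' (D' * Ce CH))
      (D' * De DH) := by
  show CertifiesCanonical (fromBlocks AΨ (BΨ * Ce (nw := nw) CH) 0 AH)
    (fromRows (BΨ * De DH) (Be (nz := nz) BH)) (fromCols CΨ (DΨ * Ce (nw := nw) CH))
    (DΨ * De DH) M (fromBlocks Z' 0 0 0) M' (fromCols C' (D' * Ce (nw := nw) CH)) (D' * De DH)
  obtain ⟨⟨hZs, hMs, h1, h2, h3⟩, hDu, hHur⟩ := hcert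
  have hDu' : IsUnit D'.det := (Matrix.isUnit_iff_isUnit_det D').mp hDu
  have hDeDet : IsUnit (De (nz := nz) DH).det := by
    simp [De, Matrix.det_fromBlocks_zero₂₁]
  have hDeu : IsUnit (De (nz := nz) DH) := (Matrix.isUnit_iff_isUnit_det _).mpr hDeDet
  have hDeInv : (De (nz := nz) DH)⁻¹ = fromBlocks 1 (-DH) 0 1 := by
    apply Matrix.inv_eq_right_inv
    simp [De, Matrix.fromBlocks_multiply]
  have h2' : BΨᵀ * Z' + DΨᵀ * M * CΨ = D'ᵀ * M' * C' := by
    have := congrArg Matrix.transpose h2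
    simpa [Matrix.transpose_add, Matrix.transpose_mul, hZs.eq, hM.eq, hMs.eq,
      Matrix.mul_assoc] using this
  refine ⟨⟨?_, hMs, ?_, ?_, ?_⟩, ?_, ?_⟩
  · -- symmetry of extended Z
    show _ = _
    rw [Matrix.fromBlocks_transpose]
    simp [hZs.eq]
  · -- identity 1
    simp only [Matrix.fromBlocks_transpose, Matrix.transpose_fromCols,
      Matrix.fromBlocks_multiply, Matrix.fromRows_mul, Matrix.mul_fromCols,
      Matrix.fromRows_mul_fromCols, Matrix.fromRows_fromCols_eq_fromBlocks, Matrix.fromCols_fromRows_eq_fromBlocks,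
      Matrix.fromBlocks_add, Matrix.transpose_zero, Matrix.transpose_mul,
      Matrix.mul_zero, Matrix.zero_mul, add_zero, zero_add, Matrix.mul_one,
      Matrix.one_mul]
    rw [Matrix.fromBlocks_inj]
    refine ⟨?_, ?_, ?_, ?_⟩
    · exact h1
    · rw [← Matrix.mul_assoc, ← Matrix.mul_assoc, ← Matrix.add_mul, h2, Matrix.mul_assoc]
    · have := congrArg (fun X => (Ce (nw := nw) CH)ᵀ * X) h2'
      simpa only [Matrix.mul_add, Matrix.mul_assoc] using this
    · have := congrArg (fun X => (Ce (nw := nw) CH)ᵀ * X * Ce (nw := nw) CH) h3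
      simpa only [Matrix.mul_assoc] using this
  · -- identity 2
    simp only [Matrix.transpose_fromCols, Matrix.fromBlocks_mul_fromRows,
      Matrix.fromRows_mul, fromRows_add', Matrix.zero_mul, add_zero, zero_add,
      Matrix.transpose_mul]
    rw [Matrix.fromRows_ext_iff]
    constructor
    · have := congrArg (fun X => X * De (nz := nz) DH) h2
      simpa only [Matrix.add_mul, Matrix.mul_assoc] using this
    · have := congrArg (fun X => (Ce (nw := nw) CH)ᵀ * X * De DH) h3
      simpa only [Matrix.mul_assoc] using this
  · -- identity 3
    have := congrArg (fun X => (De (nz := nz) DH)ᵀ * X * De DH) h3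
    simpa only [Matrix.transpose_mul, Matrix.mul_assoc] using this
  · exact hDu.mul hDeu
  · -- Hurwitz
    have e1 : BΨ * De DH * (De DH)⁻¹ = BΨ := by
      rw [Matrix.mul_assoc, Matrix.mul_nonsing_inv _ hDeDet, Matrix.mul_one]
    have e2 : Be (nz := nz) BH * (De DH)⁻¹ = Be BH := by
      rw [hDeInv]
      simp [Be, Matrix.fromCols_mul_fromBlocks]
    have e3 : Be (nz := nz) BH * Ce (nw := nw) CH = 0 := by
      simp [Be, Ce, Matrix.fromCols_mul_fromRows]
    have e4 : D'⁻¹ * (D' * Ce (nw := nw) CH) = Ce CH := by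
      rw [← Matrix.mul_assoc, Matrix.nonsing_inv_mul _ hDu', Matrix.one_mul]
    have key : fromRows (BΨ * De DH) (Be (nz := nz) BH) * (D' * De DH)⁻¹ * fromCols C' (D' * Ce (nw := nw) CH)
        = fromBlocks (BΨ * D'⁻¹ * C') (BΨ * Ce (nw := nw) CH) (Be (nz := nz) BH * D'⁻¹ * C') 0 := by
      rw [Matrix.mul_inv_rev, ← Matrix.mul_assoc, Matrix.fromRows_mul, e1, e2,
        Matrix.fromRows_mul, Matrix.fromRows_mul_fromCols, Matrix.fromBlocks_inj]
      refine ⟨rfl, ?_, rfl, ?_⟩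
      · rw [Matrix.mul_assoc, e4]
      · rw [Matrix.mul_assoc, e4, e3]
    rw [key, fromBlocks_sub']
    simp only [sub_self, sub_zero, zero_sub]
    exact isHurwitz_fromBlocks hHur hAH


end IQCPaper
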